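/- Let n > 1 be an integer and H < -1. Define C_0 = n · (H^2 n - 2 + H·sqrt(4 - 4n + H^2 n^2)) / (H(n-2) + sqrt(4 - 4n + H^2 n^2))^((2n-2)/n) · (2H^2 - 2)^((n-2)/n). Then for every C with C_0 < C < 0, the function q(v) = C - v^(2-2n) + (1 - H^2)v^2 - 2H v^(2-n) has exactly two positive roots. -/

import Mathlib

open Real

private noncomputable def qf (n : ℕ) (H C : ℝ) (v : ℝ) : ℝ :=
  C - v ^ (2 - 2*(n:ℤ)) + (1-H^2)*v^2 - 2*H*v^(2-(n:ℤ))

private lemma qf_hasDerivAt (n : ℕ) (H C : ℝ) {x : ℝ} (hx : 0 < x) :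
    HasDerivAt (qf n H C)
      ((2*(n:ℝ)-2) * x^(1-2*(n:ℤ)) + 2*(1-H^2)*x + 2*H*((n:ℝ)-2)*x^(1-(n:ℤ))) x := by
  have h1 := hasDerivAt_zpow (2-2*(n:ℤ)) x (Or.inl hx.ne')
  have h2 := hasDerivAt_zpow (2-(n:ℤ)) x (Or.inl hx.ne')
  have h3 : HasDerivAt (fun y:ℝ => (1-H^2)*y^2) ((1-H^2)*(2*x)) x := by
    simpa using (hasDerivAt_pow 2 x).const_mul (1-H^2)
  have h4 := (((hasDerivAt_const x C).sub h1).add h3).sub (h2.const_mul (2*H))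
  have e1 : (2-2*(n:ℤ)-1) = 1-2*(n:ℤ) := by ring
  have e2 : (2-(n:ℤ)-1) = 1-(n:ℤ) := by ring
  rw [e1, e2] at h4
  refine h4.congr_deriv ?_
  push_cast
  ring

private lemma rpow_inv_pow {c : ℝ} (hc : 0 < c) {n : ℕ} (hn : n ≠ 0) :
    (c ^ ((1:ℝ)/n)) ^ n = c := by
  rw [← Real.rpow_natCast (c ^ ((1:ℝ)/n)) n, ← Real.rpow_mul hc.le,
    one_div, inv_mul_cancel₀ (by exact_mod_cast hn : ((n:ℝ) ≠ 0)), Real.rpow_one]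

set_option maxHeartbeats 1000000 in
theorem stmt_2 (n : ℕ) (hn : 1 < n) (H : ℝ) (hH : H < -1) (C : ℝ)
    (hC0 : (n : ℝ) * ((H ^ 2 * n - 2 + H * Real.sqrt (4 - 4 * n + H ^ 2 * n ^ 2)) /
        (H * ((n : ℝ) - 2) + Real.sqrt (4 - 4 * n + H ^ 2 * n ^ 2)) ^ ((2 * (n : ℝ) - 2) / n)) *
        (2 * H ^ 2 - 2) ^ (((n : ℝ) - 2) / n) < C)
    (hC : C < 0) :
    ∃ a b : ℝ, 0 < a ∧ 0 < b ∧ a ≠ b ∧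
      C - a ^ (2 - 2 * (n : ℤ)) + (1 - H ^ 2) * a ^ 2 - 2 * H * a ^ (2 - (n : ℤ)) = 0 ∧
      C - b ^ (2 - 2 * (n : ℤ)) + (1 - H ^ 2) * b ^ 2 - 2 * H * b ^ (2 - (n : ℤ)) = 0 ∧
      ∀ v : ℝ, 0 < v →
        C - v ^ (2 - 2 * (n : ℤ)) + (1 - H ^ 2) * v ^ 2 - 2 * H * v ^ (2 - (n : ℤ)) = 0 →
        v = a ∨ v = b := by
  have hn2 : (2:ℝ) ≤ (n:ℝ) := by exact_mod_cast hn
  have hn0 : (0:ℝ) < (n:ℝ) := by linarith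
  have hnne : n ≠ 0 := by omega
  have hH2 : 1 < H^2 := by nlinarith
  have hD : 0 < 4 - 4*(n:ℝ) + H^2*(n:ℝ)^2 := by
    nlinarith [mul_pos (mul_pos hn0 hn0) (show (0:ℝ) < H^2-1 by nlinarith), sq_nonneg ((n:ℝ)-2)]
  set s : ℝ := Real.sqrt (4 - 4*(n:ℝ) + H^2*(n:ℝ)^2) with hsdef
  have hs0 : 0 < s := Real.sqrt_pos.mpr hD
  have hs2 : s^2 = 4 - 4*(n:ℝ) + H^2*(n:ℝ)^2 := Real.sq_sqrt hD.le
  have hHn2 : H*((n:ℝ)-2) ≤ 0 := mul_nonpos_of_nonpos_of_nonneg (by linarith) (by linarith)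
  set N : ℝ := H*((n:ℝ)-2) + s with hNdef
  have hN : 0 < N := by nlinarith [hs0, hs2, sq_nonneg (s + H*((n:ℝ)-2))]
  set M : ℝ := 2*H^2 - 2 with hMdef
  have hM : 0 < M := by nlinarith
  set w : ℝ := N / M with hwdef
  have hw : 0 < w := div_pos hN hM
  have hpw : (1-H^2)*w^2 + H*((n:ℝ)-2)*w + ((n:ℝ)-1) = 0 := by
    have hH1 : H^2-1 ≠ 0 := by nlinarith
    rw [hwdef, hNdef, hMdef]; field_simp; nlinarith [hs2]
  have hkey : 2*(1-H^2)*w + H*((n:ℝ)-2) = -s := by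
    have hH1 : H^2-1 ≠ 0 := by nlinarith
    rw [hwdef, hNdef, hMdef]; field_simp; ring
  have hp : ∀ t:ℝ, (1-H^2)*t^2 + H*((n:ℝ)-2)*t + ((n:ℝ)-1) = (t-w)*((1-H^2)*(t-w) - s) := by
    intro t
    linear_combination hpw + (t - w) * hkey
  -- the critical point
  set v : ℝ := w ^ ((1:ℝ)/(n:ℝ)) with hvdef
  have hv : 0 < v := Real.rpow_pos_of_pos hw _
  have hvn : v ^ n = w := by
    rw [hvdef]; exact rpow_inv_pow hw hnne
  set A : ℝ := w ^ ((2 - 2*(n:ℝ))/(n:ℝ)) with hAdef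
  have hApos : 0 < A := Real.rpow_pos_of_pos hw _
  have hA2 : v ^ (2 - 2*(n:ℤ)) = A := by
    rw [hvdef, hAdef, ← Real.rpow_intCast (w ^ ((1:ℝ)/(n:ℝ))) (2-2*(n:ℤ)),
      ← Real.rpow_mul hw.le]
    congr 1
    push_cast
    ring
  have hA1 : v ^ (2 - (n:ℤ)) = A * w := by
    have h1 : A * w = w ^ ((2 - 2*(n:ℝ))/(n:ℝ) + 1) := by
      rw [Real.rpow_add hw, Real.rpow_one, hAdef]
    rw [h1, hvdef, ← Real.rpow_intCast (w ^ ((1:ℝ)/(n:ℝ))) (2-(n:ℤ)), ← Real.rpow_mul hw.le]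
    congr 1
    push_cast
    field_simp
    ring
  have hA0 : v ^ 2 = A * w ^ 2 := by
    have h1 : A * w ^ 2 = w ^ ((2 - 2*(n:ℝ))/(n:ℝ) + 2) := by
      rw [Real.rpow_add hw, hAdef, show ((2:ℝ)) = ((2:ℕ):ℝ) by norm_num, Real.rpow_natCast]
    rw [h1, hvdef, ← Real.rpow_natCast (w ^ ((1:ℝ)/(n:ℝ))) 2, ← Real.rpow_mul hw.le]
    congr 1
    push_cast
    field_simp
    ring
  have hfv : qf n H C v = C - (n:ℝ)*(H*w+1)*A := by
    rw [qf, hA2, hA1, hA0]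
    linear_combination A * hpw
  have hHw1 : (H*w+1)*M = H^2*(n:ℝ) - 2 + H*s := by
    rw [hwdef]; field_simp [hNdef, hMdef]; ring
  have hNe : N ^ ((2 - 2*(n:ℝ))/(n:ℝ)) = (N ^ ((2 * (n:ℝ) - 2) / (n:ℝ)))⁻¹ := by
    rw [show (2 - 2*(n:ℝ))/(n:ℝ) = -((2 * (n:ℝ) - 2) / (n:ℝ)) by ring, Real.rpow_neg hN.le]
  have hMe : M ^ ((2 - 2*(n:ℝ))/(n:ℝ)) = (M ^ (((n:ℝ) - 2) / (n:ℝ)) * M)⁻¹ := by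
    rw [show (2 - 2*(n:ℝ))/(n:ℝ) = -((((n:ℝ)-2)/(n:ℝ)) + 1) by field_simp; ring,
      Real.rpow_neg hM.le, Real.rpow_add hM, Real.rpow_one]
  have hA' : A = (N ^ ((2 * (n:ℝ) - 2) / (n:ℝ)))⁻¹ * (M ^ (((n:ℝ) - 2) / (n:ℝ)) * M) := by
    rw [hAdef, hwdef, Real.div_rpow hN.le hM.le, hNe, hMe, div_inv_eq_mul]
  have hC0eq : (n:ℝ) * ((H ^ 2 * (n:ℝ) - 2 + H * s) / N ^ ((2 * (n:ℝ) - 2) / (n:ℝ))) *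
      M ^ (((n:ℝ) - 2) / (n:ℝ)) = (n:ℝ)*(H*w+1)*A := by
    have hXpos : (0:ℝ) < N ^ ((2 * (n:ℝ) - 2) / (n:ℝ)) := Real.rpow_pos_of_pos hN _
    rw [hA', ← hHw1]
    field_simp
  have hfvpos : 0 < qf n H C v := by
    rw [hfv]
    rw [hC0eq] at hC0
    linarith
  -- derivative sign
  have hderiv_eq : ∀ x : ℝ, 0 < x →
      deriv (qf n H C) x
        = 2*((1-H^2)*(x^n)^2 + H*((n:ℝ)-2)*(x^n) + ((n:ℝ)-1)) * x^(1-2*(n:ℤ)) := by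
    intro x hx
    rw [(qf_hasDerivAt n H C hx).deriv]
    have e1 : ((x:ℝ)^n)^2 * x^(1-2*(n:ℤ)) = x := by
      rw [← zpow_natCast x n, ← zpow_natCast (x^(n:ℤ)) 2, ← zpow_mul, ← zpow_add₀ hx.ne',
        show (n:ℤ)*(2:ℕ) + (1-2*(n:ℤ)) = 1 by push_cast; ring, zpow_one]
    have e2 : (x:ℝ)^n * x^(1-2*(n:ℤ)) = x^(1-(n:ℤ)) := by
      rw [← zpow_natCast x n, ← zpow_add₀ hx.ne']
      congr 1
      ring
    linear_combination (-2*(1-H^2))*e1 + (-2*H*((n:ℝ)-2))*e2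
  have hderiv_pos : ∀ x : ℝ, 0 < x → x < v → 0 < deriv (qf n H C) x := by
    intro x hx hxv
    rw [hderiv_eq x hx]
    have htw : x^n < w := by
      rw [← hvn]
      exact pow_lt_pow_left₀ hxv hx.le hnne
    have htpos : 0 < x^n := pow_pos hx n
    have hfac : 0 < (1-H^2)*(x^n)^2 + H*((n:ℝ)-2)*(x^n) + ((n:ℝ)-1) := by
      rw [hp (x^n)]
      apply mul_pos_of_neg_of_neg (by linarith)
      nlinarith [mul_pos (show (0:ℝ) < H^2-1 by linarith) htpos]
    have hzp : (0:ℝ) < x^(1-2*(n:ℤ)) := zpow_pos hx _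
    exact mul_pos (by linarith) hzp
  have hderiv_neg : ∀ x : ℝ, v < x → deriv (qf n H C) x < 0 := by
    intro x hxv
    have hx : 0 < x := hv.trans hxv
    rw [hderiv_eq x hx]
    have htw : w < x^n := by
      rw [← hvn]
      exact pow_lt_pow_left₀ hxv hv.le hnne
    have hfac : (1-H^2)*(x^n)^2 + H*((n:ℝ)-2)*(x^n) + ((n:ℝ)-1) < 0 := by
      rw [hp (x^n)]
      apply mul_neg_of_pos_of_neg (by linarith)
      nlinarith [mul_pos (show (0:ℝ) < H^2-1 by linarith) (show (0:ℝ) < x^n - w by linarith)]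
    have hzp : (0:ℝ) < x^(1-2*(n:ℤ)) := zpow_pos hx _
    exact mul_neg_of_neg_of_pos (by linarith) hzp
  have hcont : ∀ x : ℝ, 0 < x → ContinuousAt (qf n H C) x := fun x hx =>
    (qf_hasDerivAt n H C hx).continuousAt
  have hmono : StrictMonoOn (qf n H C) (Set.Ioc 0 v) := by
    apply strictMonoOn_of_deriv_pos (convex_Ioc 0 v)
    · exact fun x hx => (hcont x hx.1).continuousWithinAt
    · rw [interior_Ioc]
      exact fun x hx => hderiv_pos x hx.1 hx.2
  have hanti : StrictAntiOn (qf n H C) (Set.Ici v) := by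
    apply strictAntiOn_of_deriv_neg (convex_Ici v)
    · exact fun x hx => (hcont x (lt_of_lt_of_le hv hx)).continuousWithinAt
    · rw [interior_Ici]
      exact fun x hx => hderiv_neg x hx
  -- negativity near 0
  have hmH : (0:ℝ) < 2*(-H) := by linarith
  set B1 : ℝ := ((2*(-H))⁻¹) ^ ((1:ℝ)/(n:ℝ)) with hB1def
  have hB1pos : 0 < B1 := Real.rpow_pos_of_pos (inv_pos.mpr hmH) _
  set x₁ : ℝ := min v B1 / 2 with hx₁def
  have hmin1 : 0 < min v B1 := lt_min hv hB1pos
  have hx₁pos : 0 < x₁ := by rw [hx₁def]; linarith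
  have hx₁v : x₁ < v := by
    have h1 := min_le_left v B1
    rw [hx₁def]
    linarith
  have hx₁B : x₁ < B1 := by
    have h1 := min_le_right v B1
    rw [hx₁def]
    linarith
  have hx₁n : x₁^n < (2*(-H))⁻¹ := by
    calc x₁^n < B1^n := pow_lt_pow_left₀ hx₁B hx₁pos.le hnne
    _ = (2*(-H))⁻¹ := rpow_inv_pow (inv_pos.mpr hmH) hnne
  have hfx₁ : qf n H C x₁ < 0 := by
    have ht : (0:ℝ) < x₁^n := pow_pos hx₁pos n
    have hinv : 2*(-H) < (x₁^n)⁻¹ := by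
      have h1 : x₁^n * (2*(-H)) < 1 := by
        have h2 := mul_lt_mul_of_pos_right hx₁n (show (0:ℝ) < 2*(-H) by linarith)
        rwa [inv_mul_cancel₀ hmH.ne'] at h2
      have h3 : x₁^n * (x₁^n)⁻¹ = 1 := mul_inv_cancel₀ ht.ne'
      exact lt_of_mul_lt_mul_left (by linarith : x₁^n * (2*(-H)) < x₁^n * (x₁^n)⁻¹) ht.le
    have hzsplit : x₁ ^ (2 - 2*(n:ℤ)) = x₁^(2-(n:ℤ)) * (x₁^n)⁻¹ := by
      rw [← zpow_natCast x₁ n, ← zpow_neg, ← zpow_add₀ hx₁pos.ne']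
      congr 1
      ring
    have hz1 : (0:ℝ) < x₁ ^ (2-(n:ℤ)) := zpow_pos hx₁pos _
    rw [qf, hzsplit]
    have hsq : (1-H^2)*x₁^2 < 0 :=
      mul_neg_of_neg_of_pos (by linarith) (pow_pos hx₁pos 2)
    linarith [mul_pos hz1 (show (0:ℝ) < (x₁^n)⁻¹ + 2*H by linarith)]
  -- negativity at infinity
  have hB2base : (0:ℝ) < (2*(-H))/(H^2-1) := div_pos hmH (by linarith)
  set B2 : ℝ := ((2*(-H))/(H^2-1)) ^ ((1:ℝ)/(n:ℝ)) with hB2def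
  have hB2pos : 0 < B2 := Real.rpow_pos_of_pos hB2base _
  set x₂ : ℝ := max v B2 + 1 with hx₂def
  have hx₂v : v < x₂ := by
    have := le_max_left v B2
    rw [hx₂def]; linarith
  have hx₂B : B2 < x₂ := by
    have := le_max_right v B2
    rw [hx₂def]; linarith
  have hx₂pos : 0 < x₂ := hv.trans hx₂v
  have hx₂n : (2*(-H))/(H^2-1) < x₂^n := by
    calc (2*(-H))/(H^2-1) = B2^n := (rpow_inv_pow hB2base hnne).symm
    _ < x₂^n := pow_lt_pow_left₀ hx₂B hB2pos.le hnne
  have hfx₂ : qf n H C x₂ < 0 := by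
    have hzsplit : (x₂:ℝ) ^ (2 : ℤ) = x₂^(2-(n:ℤ)) * x₂^n := by
      rw [← zpow_natCast x₂ n, ← zpow_add₀ hx₂pos.ne']
      congr 1
      ring
    have hz2 : (x₂:ℝ)^(2:ℤ) = x₂^2 := by
      rw [show ((2:ℤ)) = ((2:ℕ):ℤ) by norm_num, zpow_natCast]
    have hz1 : (0:ℝ) < x₂ ^ (2-(n:ℤ)) := zpow_pos hx₂pos _
    have hz3 : (0:ℝ) < x₂ ^ (2-2*(n:ℤ)) := zpow_pos hx₂pos _
    have hmain : (1-H^2)*x₂^2 + (H^2-1)*(x₂^(2-(n:ℤ)) * x₂^n) = 0 := by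
      rw [← hz2, hzsplit]; ring
    have hHx : -(2*H) * x₂^(2-(n:ℤ)) < (H^2-1) * (x₂^(2-(n:ℤ)) * x₂^n) := by
      have h1 : (2*(-H)) < (H^2-1) * x₂^n := by
        rw [div_lt_iff₀ (show (0:ℝ) < H^2-1 by linarith)] at hx₂n
        linarith [hx₂n]
      calc -(2*H) * x₂^(2-(n:ℤ)) = (2*(-H)) * x₂^(2-(n:ℤ)) := by ring
      _ < ((H^2-1) * x₂^n) * x₂^(2-(n:ℤ)) := by
          exact mul_lt_mul_of_pos_right h1 hz1
      _ = (H^2-1) * (x₂^(2-(n:ℤ)) * x₂^n) := by ring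
    rw [qf]
    linarith [hmain, hHx, hz3]
  -- the two roots via IVT
  have hcont1 : ContinuousOn (qf n H C) (Set.Icc x₁ v) := fun x hx =>
    (hcont x (lt_of_lt_of_le hx₁pos hx.1)).continuousWithinAt
  have hcont2 : ContinuousOn (qf n H C) (Set.Icc v x₂) := fun x hx =>
    (hcont x (lt_of_lt_of_le hv hx.1)).continuousWithinAt
  obtain ⟨a, haI, hfa⟩ := intermediate_value_Icc hx₁v.le hcont1
    (Set.mem_Icc.mpr ⟨hfx₁.le, hfvpos.le⟩ : (0:ℝ) ∈ Set.Icc (qf n H C x₁) (qf n H C v))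
  obtain ⟨b, hbI, hfb⟩ := intermediate_value_Icc' hx₂v.le hcont2
    (Set.mem_Icc.mpr ⟨hfx₂.le, hfvpos.le⟩ : (0:ℝ) ∈ Set.Icc (qf n H C x₂) (qf n H C v))
  have hapos : 0 < a := lt_of_lt_of_le hx₁pos haI.1
  have hbpos : 0 < b := lt_of_lt_of_le hv hbI.1
  have hav : a < v :=
    lt_of_le_of_ne haI.2 (fun h => by rw [← h] at hfvpos; rw [hfa] at hfvpos; exact lt_irrefl 0 hfvpos)
  have hvb : v < b :=
    lt_of_le_of_ne hbI.1 (fun h => by rw [h] at hfvpos; rw [hfb] at hfvpos; exact lt_irrefl 0 hfvpos)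
  refine ⟨a, b, hapos, hbpos, ne_of_lt (hav.trans hvb), ?_, ?_, ?_⟩
  · simpa only [qf] using hfa
  · simpa only [qf] using hfb
  · intro v0 hv0 hfv0
    have hqv0 : qf n H C v0 = 0 := by simpa only [qf] using hfv0
    rcases le_or_gt v0 v with hle | hlt
    · left
      exact hmono.injOn ⟨hv0, hle⟩ ⟨hapos, hav.le⟩ (hqv0.trans hfa.symm)
    · right
      exact hanti.injOn (Set.mem_Ici.mpr hlt.le) (Set.mem_Ici.mpr hvb.le) (hqv0.trans hfb.symm)
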